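/- arXiv:1007.1443 — 2 statements merged into one kernel-verified Lean document; each statement's English description precedes it below -/
import Mathlib

section
/- For i = 1, 2, 3 let fᵢ, hᵢ, bᵢ : ℝ → ℝ be differentiable functions satisfying fᵢ' = 2hᵢ, hᵢ' = 2λ²fᵢ − 2hᵢ − μ·bᵢ, bᵢ' = μ·hᵢ − 2bᵢ, with initial values f₁(0)=0, h₁(0)=0, b₁(0)=1; f₂(0)=1, h₂(0)=0, b₂(0)=0; f₃(0)=0, h₃(0)=−1, b₃(0)=0. Then (f₂(t) + f₃(t))·(f₂(t) − f₃(t)) = 1 + f₁(t)² for every t ∈ ℝ. -/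
/-- The function `λ(t) = e^(-2t)`. -/
noncomputable def lam (t : ℝ) : ℝ := Real.exp (-2 * t)

lemma hasDerivAt_lam_sq (t : ℝ) : HasDerivAt (fun s => lam s ^ 2) (-4 * lam t ^ 2) t := by
  have h1 : HasDerivAt (fun s : ℝ => -2 * s) (-2) t := by
    simpa using (hasDerivAt_id t).const_mul (-2)
  have h : HasDerivAt lam (-2 * lam t) t := by
    have h2 := (Real.hasDerivAt_exp (-2 * t)).comp t h1
    have h3 : HasDerivAt lam (Real.exp (-2 * t) * -2) t := h2
    simpa [lam, mul_comm] using h3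
  refine (h.pow 2).congr_deriv ?_
  ring

lemma quad_bound (L Λ M u d0 d1 d2 d3 d4 d5 : ℝ) (hL0 : 0 ≤ L) (hLΛ : L ≤ Λ)
    (hu : |u| ≤ M) :
    |2 * (d0 * (4 * d1) + d1 * (2 * d2 + 2 * L * d0 - 2 * d1 - u * d3)
      + d2 * (4 * L * d1 - 4 * d2 - 2 * u * d4) + d3 * (2 * d4 + u * d1 - 2 * d3)
      + d4 * (2 * L * d3 - 4 * d4 + u * (d2 - d5)) + d5 * (2 * u * d4 - 4 * d5))|
      ≤ (16 + 8 * Λ + 2 * M) * (d0^2 + d1^2 + d2^2 + d3^2 + d4^2 + d5^2) := by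
  have hM : 0 ≤ M := (abs_nonneg u).trans hu
  have hu1 : -M ≤ u := neg_le_of_abs_le hu
  have hu2 : u ≤ M := le_of_abs_le hu
  have hΛ : 0 ≤ Λ := hL0.trans hLΛ
  rw [abs_le]
  constructor
  · linarith [sq_nonneg (d0 + d1), sq_nonneg (d1 + d2), sq_nonneg (d3 + d4),
      mul_nonneg hL0 (sq_nonneg (d0 + d1)), mul_nonneg hL0 (sq_nonneg (d1 + d2)),
      mul_nonneg hL0 (sq_nonneg (d3 + d4)),
      mul_nonneg (sub_nonneg.2 hu2) (sq_nonneg (d4 - d5)),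
      mul_nonneg (by linarith : (0:ℝ) ≤ M + u) (sq_nonneg (d4 + d5)),
      mul_nonneg (sub_nonneg.2 hu2) (sq_nonneg (d2 + d4)),
      mul_nonneg (by linarith : (0:ℝ) ≤ M + u) (sq_nonneg (d2 - d4)),
      sq_nonneg d0, sq_nonneg d1, sq_nonneg d2, sq_nonneg d3, sq_nonneg d4, sq_nonneg d5,
      mul_nonneg hM (sq_nonneg d0), mul_nonneg hM (sq_nonneg d1), mul_nonneg hM (sq_nonneg d2),
      mul_nonneg hM (sq_nonneg d3), mul_nonneg hM (sq_nonneg d4), mul_nonneg hM (sq_nonneg d5),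
      mul_nonneg hΛ (sq_nonneg d0), mul_nonneg hΛ (sq_nonneg d1), mul_nonneg hΛ (sq_nonneg d2),
      mul_nonneg hΛ (sq_nonneg d3), mul_nonneg hΛ (sq_nonneg d4), mul_nonneg hΛ (sq_nonneg d5),
      mul_nonneg (sub_nonneg.2 hLΛ) (sq_nonneg d0), mul_nonneg (sub_nonneg.2 hLΛ) (sq_nonneg d1),
      mul_nonneg (sub_nonneg.2 hLΛ) (sq_nonneg d2), mul_nonneg (sub_nonneg.2 hLΛ) (sq_nonneg d3),
      mul_nonneg (sub_nonneg.2 hLΛ) (sq_nonneg d4), mul_nonneg (sub_nonneg.2 hLΛ) (sq_nonneg d5)]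
  · linarith [sq_nonneg (d0 - d1), sq_nonneg (d1 - d2), sq_nonneg (d3 - d4),
      mul_nonneg hL0 (sq_nonneg (d0 - d1)), mul_nonneg hL0 (sq_nonneg (d1 - d2)),
      mul_nonneg hL0 (sq_nonneg (d3 - d4)),
      mul_nonneg (sub_nonneg.2 hu2) (sq_nonneg (d4 + d5)),
      mul_nonneg (by linarith : (0:ℝ) ≤ M + u) (sq_nonneg (d4 - d5)),
      mul_nonneg (sub_nonneg.2 hu2) (sq_nonneg (d2 - d4)),
      mul_nonneg (by linarith : (0:ℝ) ≤ M + u) (sq_nonneg (d2 + d4)),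
      sq_nonneg d0, sq_nonneg d1, sq_nonneg d2, sq_nonneg d3, sq_nonneg d4, sq_nonneg d5,
      mul_nonneg hM (sq_nonneg d0), mul_nonneg hM (sq_nonneg d1), mul_nonneg hM (sq_nonneg d2),
      mul_nonneg hM (sq_nonneg d3), mul_nonneg hM (sq_nonneg d4), mul_nonneg hM (sq_nonneg d5),
      mul_nonneg hΛ (sq_nonneg d0), mul_nonneg hΛ (sq_nonneg d1), mul_nonneg hΛ (sq_nonneg d2),
      mul_nonneg hΛ (sq_nonneg d3), mul_nonneg hΛ (sq_nonneg d4), mul_nonneg hΛ (sq_nonneg d5),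
      mul_nonneg (sub_nonneg.2 hLΛ) (sq_nonneg d0), mul_nonneg (sub_nonneg.2 hLΛ) (sq_nonneg d1),
      mul_nonneg (sub_nonneg.2 hLΛ) (sq_nonneg d2), mul_nonneg (sub_nonneg.2 hLΛ) (sq_nonneg d3),
      mul_nonneg (sub_nonneg.2 hLΛ) (sq_nonneg d4), mul_nonneg (sub_nonneg.2 hLΛ) (sq_nonneg d5)]

lemma aux_zero (μ : ℝ → ℝ) (hμ : Continuous μ) (d0 d1 d2 d3 d4 d5 : ℝ → ℝ)
    (h0 : ∀ t, HasDerivAt d0 (4 * d1 t) t)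
    (h1 : ∀ t, HasDerivAt d1 (2 * d2 t + 2 * lam t ^ 2 * d0 t - 2 * d1 t - μ t * d3 t) t)
    (h2 : ∀ t, HasDerivAt d2 (4 * lam t ^ 2 * d1 t - 4 * d2 t - 2 * μ t * d4 t) t)
    (h3 : ∀ t, HasDerivAt d3 (2 * d4 t + μ t * d1 t - 2 * d3 t) t)
    (h4 : ∀ t, HasDerivAt d4 (2 * lam t ^ 2 * d3 t - 4 * d4 t + μ t * (d2 t - d5 t)) t)
    (h5 : ∀ t, HasDerivAt d5 (2 * μ t * d4 t - 4 * d5 t) t)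
    (i0 : d0 0 = 0) (i1 : d1 0 = 0) (i2 : d2 0 = 0) (i3 : d3 0 = 0)
    (i4 : d4 0 = 0) (i5 : d5 0 = 0) :
    ∀ t, d0 t = 0 := by
  set N : ℝ → ℝ := fun t => d0 t^2 + d1 t^2 + d2 t^2 + d3 t^2 + d4 t^2 + d5 t^2 with hNdef
  set G : ℝ → ℝ := fun t =>
    2 * (d0 t * (4 * d1 t)
      + d1 t * (2 * d2 t + 2 * lam t ^ 2 * d0 t - 2 * d1 t - μ t * d3 t)
      + d2 t * (4 * lam t ^ 2 * d1 t - 4 * d2 t - 2 * μ t * d4 t)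
      + d3 t * (2 * d4 t + μ t * d1 t - 2 * d3 t)
      + d4 t * (2 * lam t ^ 2 * d3 t - 4 * d4 t + μ t * (d2 t - d5 t))
      + d5 t * (2 * μ t * d4 t - 4 * d5 t)) with hGdef
  have hN : ∀ t, HasDerivAt N (G t) t := by
    intro t
    have H := ((((((h0 t).mul (h0 t)).add ((h1 t).mul (h1 t))).add
      ((h2 t).mul (h2 t))).add ((h3 t).mul (h3 t))).add
      ((h4 t).mul (h4 t))).add ((h5 t).mul (h5 t))
    convert H using 1
    · rfl
    · rfl
    · funext s; simp only [hNdef, Pi.add_apply, Pi.mul_apply]; ring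
    · simp only [hGdef]; ring
  have hNcont : Continuous N := by
    have c0 : Continuous d0 := continuous_iff_continuousAt.2 fun t => (h0 t).continuousAt
    have c1 : Continuous d1 := continuous_iff_continuousAt.2 fun t => (h1 t).continuousAt
    have c2 : Continuous d2 := continuous_iff_continuousAt.2 fun t => (h2 t).continuousAt
    have c3 : Continuous d3 := continuous_iff_continuousAt.2 fun t => (h3 t).continuousAt
    have c4 : Continuous d4 := continuous_iff_continuousAt.2 fun t => (h4 t).continuousAt
    have c5 : Continuous d5 := continuous_iff_continuousAt.2 fun t => (h5 t).continuousAt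
    exact ((((((c0.pow 2).add (c1.pow 2)).add (c2.pow 2)).add (c3.pow 2)).add
      (c4.pow 2)).add (c5.pow 2))
  have hN0 : N 0 = 0 := by simp [hNdef, i0, i1, i2, i3, i4, i5]
  have hNnonneg : ∀ t, 0 ≤ N t := fun t => by
    simp only [hNdef]; positivity
  have hNzero : ∀ t, N t = 0 := by
    intro t
    set T := |t| with hTdef
    have hT0 : (0:ℝ) ≤ T := abs_nonneg t
    obtain ⟨M, hM⟩ := (isCompact_Icc : IsCompact (Set.Icc (-T) T)).exists_bound_of_continuousOn
      hμ.continuousOn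
    set C := 16 + 8 * Real.exp (4 * T) + 2 * M with hCdef
    have hbound : ∀ s ∈ Set.Icc (-T) T, |G s| ≤ C * N s := by
      intro s hs
      have hLs : (0:ℝ) ≤ lam s ^ 2 := sq_nonneg _
      have hLΛ : lam s ^ 2 ≤ Real.exp (4 * T) := by
        have he : lam s ^ 2 = Real.exp (-2 * s + -2 * s) := by
          rw [Real.exp_add, sq]; rfl
        rw [he]
        exact Real.exp_le_exp.2 (by obtain ⟨hs1, hs2⟩ := hs; linarith)
      have hus : |μ s| ≤ M := hM s hs
      simpa only [hGdef, hNdef] using quad_bound (lam s ^ 2) (Real.exp (4 * T)) M (μ s)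
        (d0 s) (d1 s) (d2 s) (d3 s) (d4 s) (d5 s) hLs hLΛ hus
    rcases le_or_gt 0 t with ht | ht
    · have hTt : T = t := abs_of_nonneg ht
      have hbd : ∀ x ∈ Set.Ico (0:ℝ) t, ‖G x‖ ≤ C * ‖N x‖ + 0 := by
        intro x hx
        have hx1 : -T ≤ x := by linarith [hx.1, hT0]
        have hx2 : x ≤ T := by rw [hTt]; exact hx.2.le
        have hb := hbound x ⟨hx1, hx2⟩
        rw [Real.norm_eq_abs, Real.norm_eq_abs, abs_of_nonneg (hNnonneg x)]
        linarith
      have gw := norm_le_gronwallBound_of_norm_deriv_right_le (f := N) (f' := G)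
        (δ := 0) (K := C) (ε := 0) (a := 0) (b := t) hNcont.continuousOn
        (fun x _ => (hN x).hasDerivWithinAt) (by simp [hN0]) hbd t (Set.right_mem_Icc.2 ht)
      rw [sub_zero, gronwallBound_ε0, zero_mul] at gw
      exact norm_le_zero_iff.1 gw
    · have hTt : T = -t := abs_of_neg ht
      have hNrev : ∀ s : ℝ, HasDerivAt (fun s => N (-s)) (-G (-s)) s := by
        intro s
        have hcomp := (hN (-s)).comp s (hasDerivAt_neg s)
        refine hcomp.congr_deriv ?_
        ring
      have hbd : ∀ x ∈ Set.Ico (0:ℝ) (-t), ‖-G (-x)‖ ≤ C * ‖N (-x)‖ + 0 := by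
        intro x hx
        have hx1 : -T ≤ -x := by rw [hTt]; linarith [hx.2.le]
        have hx2 : -x ≤ T := by linarith [hx.1, hT0]
        have hb := hbound (-x) ⟨hx1, hx2⟩
        rw [norm_neg, Real.norm_eq_abs, Real.norm_eq_abs, abs_of_nonneg (hNnonneg (-x))]
        linarith
      have gw := norm_le_gronwallBound_of_norm_deriv_right_le (f := fun s => N (-s))
        (f' := fun s => -G (-s)) (δ := 0) (K := C) (ε := 0) (a := 0) (b := -t)
        (hNcont.comp continuous_neg).continuousOn
        (fun x _ => (hNrev x).hasDerivWithinAt) (by simp [hN0]) hbd (-t)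
        (Set.right_mem_Icc.2 (by linarith))
      rw [sub_zero, gronwallBound_ε0, zero_mul] at gw
      have := norm_le_zero_iff.1 gw
      simpa using this
  intro t
  have hzero := hNzero t
  simp only [hNdef] at hzero
  have h2 : d0 t ^ 2 = 0 := by
    nlinarith [sq_nonneg (d0 t), sq_nonneg (d1 t), sq_nonneg (d2 t), sq_nonneg (d3 t),
      sq_nonneg (d4 t), sq_nonneg (d5 t)]
  exact pow_eq_zero_iff (two_ne_zero) |>.1 h2

theorem stmt_6 (μ : ℝ → ℝ) (hμ : Continuous μ)
    (f₁ f₂ f₃ h₁ h₂ h₃ b₁ b₂ b₃ : ℝ → ℝ)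
    (hf₁ : ∀ t, HasDerivAt f₁ (2 * h₁ t) t)
    (hf₂ : ∀ t, HasDerivAt f₂ (2 * h₂ t) t)
    (hf₃ : ∀ t, HasDerivAt f₃ (2 * h₃ t) t)
    (hh₁ : ∀ t, HasDerivAt h₁ (2 * (lam t) ^ 2 * f₁ t - 2 * h₁ t - μ t * b₁ t) t)
    (hh₂ : ∀ t, HasDerivAt h₂ (2 * (lam t) ^ 2 * f₂ t - 2 * h₂ t - μ t * b₂ t) t)
    (hh₃ : ∀ t, HasDerivAt h₃ (2 * (lam t) ^ 2 * f₃ t - 2 * h₃ t - μ t * b₃ t) t)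
    (hb₁ : ∀ t, HasDerivAt b₁ (μ t * h₁ t - 2 * b₁ t) t)
    (hb₂ : ∀ t, HasDerivAt b₂ (μ t * h₂ t - 2 * b₂ t) t)
    (hb₃ : ∀ t, HasDerivAt b₃ (μ t * h₃ t - 2 * b₃ t) t)
    (hf₁0 : f₁ 0 = 0) (hh₁0 : h₁ 0 = 0) (hb₁0 : b₁ 0 = 1)
    (hf₂0 : f₂ 0 = 1) (hh₂0 : h₂ 0 = 0) (hb₂0 : b₂ 0 = 0)
    (hf₃0 : f₃ 0 = 0) (hh₃0 : h₃ 0 = -1) (hb₃0 : b₃ 0 = 0) :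
    ∀ t : ℝ, (f₂ t + f₃ t) * (f₂ t - f₃ t) = 1 + (f₁ t) ^ 2 := by
  have key := aux_zero μ hμ
    (fun t => f₂ t ^ 2 - f₃ t ^ 2 - f₁ t ^ 2 - 1)
    (fun t => f₂ t * h₂ t - f₃ t * h₃ t - f₁ t * h₁ t)
    (fun t => h₂ t ^ 2 - h₃ t ^ 2 - h₁ t ^ 2 + lam t ^ 2)
    (fun t => f₂ t * b₂ t - f₃ t * b₃ t - f₁ t * b₁ t)
    (fun t => h₂ t * b₂ t - h₃ t * b₃ t - h₁ t * b₁ t)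
    (fun t => b₂ t ^ 2 - b₃ t ^ 2 - b₁ t ^ 2 + lam t ^ 2)
    (fun t => by
      have H := ((((hf₂ t).pow 2).sub ((hf₃ t).pow 2)).sub ((hf₁ t).pow 2)).sub_const 1
      refine H.congr_deriv ?_; push_cast; ring)
    (fun t => by
      have H := (((hf₂ t).mul (hh₂ t)).sub ((hf₃ t).mul (hh₃ t))).sub ((hf₁ t).mul (hh₁ t))
      refine H.congr_deriv ?_; ring)
    (fun t => by
      have H := ((((hh₂ t).pow 2).sub ((hh₃ t).pow 2)).sub ((hh₁ t).pow 2)).add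
        (hasDerivAt_lam_sq t)
      refine H.congr_deriv ?_; push_cast; ring)
    (fun t => by
      have H := (((hf₂ t).mul (hb₂ t)).sub ((hf₃ t).mul (hb₃ t))).sub ((hf₁ t).mul (hb₁ t))
      refine H.congr_deriv ?_; ring)
    (fun t => by
      have H := (((hh₂ t).mul (hb₂ t)).sub ((hh₃ t).mul (hb₃ t))).sub ((hh₁ t).mul (hb₁ t))
      refine H.congr_deriv ?_; ring)
    (fun t => by
      have H := ((((hb₂ t).pow 2).sub ((hb₃ t).pow 2)).sub ((hb₁ t).pow 2)).add
        (hasDerivAt_lam_sq t)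
      refine H.congr_deriv ?_; push_cast; ring)
    (by simp [hf₁0, hf₂0, hf₃0])
    (by simp [hf₁0, hf₂0, hf₃0, hh₁0, hh₂0, hh₃0])
    (by simp [hh₁0, hh₂0, hh₃0, lam])
    (by simp [hf₁0, hf₂0, hf₃0, hb₁0, hb₂0, hb₃0])
    (by simp [hh₁0, hh₂0, hh₃0, hb₁0, hb₂0, hb₃0])
    (by simp [hb₁0, hb₂0, hb₃0, lam])
  intro t
  have hk : f₂ t ^ 2 - f₃ t ^ 2 - f₁ t ^ 2 - 1 = 0 := key t
  linear_combination hk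
end

section
/- For i = 1, 2, 3 let fᵢ, hᵢ, bᵢ : ℝ → ℝ be differentiable functions satisfying fᵢ' = 2hᵢ, hᵢ' = 2λ²fᵢ − 2hᵢ − μ·bᵢ, bᵢ' = μ·hᵢ − 2bᵢ, with initial values f₁(0)=0, h₁(0)=0, b₁(0)=1; f₂(0)=1, h₂(0)=0, b₂(0)=0; f₃(0)=0, h₃(0)=−1, b₃(0)=0. Then f₂(t) + f₃(t) > 0 and f₂(t) − f₃(t) > 0 for every t ∈ ℝ. -/
lemma exp_deriv (c t : ℝ) :
    HasDerivAt (fun s : ℝ => Real.exp (c * s)) (Real.exp (c * t) * c) t := by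
  simpa using ((hasDerivAt_id t).const_mul c).exp

lemma hlam_deriv : ∀ t : ℝ, HasDerivAt lam (-2 * lam t) t := by
  intro t
  have h := exp_deriv (-2) t
  show HasDerivAt (fun s : ℝ => Real.exp (-2 * s)) (-2 * Real.exp (-2 * t)) t
  convert h using 1
  ring

lemma lam_pos (t : ℝ) : 0 < lam t := Real.exp_pos _

lemma key (μ : ℝ → ℝ) (F H B : ℝ → ℝ)
    (hF : ∀ t, HasDerivAt F (2 * H t) t)
    (hH : ∀ t, HasDerivAt H (2 * (lam t) ^ 2 * F t - 2 * H t - μ t * B t) t)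
    (hB : ∀ t, HasDerivAt B (μ t * H t - 2 * B t) t)
    (hF0 : F 0 = 1) (hu0 : H 0 ^ 2 + B 0 ^ 2 = 1) :
    ∀ t, 0 < F t := by
  -- the conserved quantity
  set U : ℝ → ℝ := fun t => Real.exp (4 * t) * (H t ^ 2 + B t ^ 2 - (lam t) ^ 2 * F t ^ 2)
    with hUdef
  have hU : ∀ t, HasDerivAt U 0 t := by
    intro t
    have h1 := exp_deriv 4 t
    have hH2 := (hH t).pow 2
    have hB2 := (hB t).pow 2
    have hl2 := (hlam_deriv t).pow 2
    have hF2 := (hF t).pow 2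
    have hin := (hH2.add hB2).sub (hl2.mul hF2)
    have := h1.mul hin
    refine this.congr_deriv ?_
    simp only [pow_one, Nat.cast_ofNat, Pi.pow_apply, Pi.add_apply, Pi.sub_apply, Pi.mul_apply]
    ring
  have hUc : ∀ t, U t = 0 := by
    intro t
    have hdiff : Differentiable ℝ U := fun x => (hU x).differentiableAt
    have hconst : U t = U 0 :=
      is_const_of_deriv_eq_zero hdiff (fun x => (hU x).deriv) t 0
    rw [hconst, hUdef]
    simp [lam, hF0, hu0]
  have hq : ∀ t, (lam t) ^ 2 * F t ^ 2 = H t ^ 2 + B t ^ 2 := by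
    intro t
    have h0 : Real.exp (4 * t) * (H t ^ 2 + B t ^ 2 - (lam t) ^ 2 * F t ^ 2) = 0 := hUc t
    have he : Real.exp (4 * t) ≠ 0 := (Real.exp_pos _).ne'
    have hx := (mul_eq_zero.mp h0).resolve_left he
    linarith
  -- g = λ²F², g' = 4λ²FH - 4g
  set g : ℝ → ℝ := fun t => (lam t) ^ 2 * F t ^ 2 with hgdef
  have hg : ∀ t, HasDerivAt g (4 * (lam t) ^ 2 * F t * H t - 4 * g t) t := by
    intro t
    have := ((hlam_deriv t).pow 2).mul ((hF t).pow 2)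
    refine this.congr_deriv ?_
    show _ = 4 * (lam t) ^ 2 * F t * H t - 4 * ((lam t) ^ 2 * F t ^ 2)
    simp only [pow_one, Nat.cast_ofNat, Pi.pow_apply, Pi.add_apply, Pi.sub_apply, Pi.mul_apply]
    ring
  have hg0 : g 0 = 1 := by
    show (lam 0) ^ 2 * F 0 ^ 2 = 1
    simp [lam, hF0]
  have hgnn : ∀ t, 0 ≤ g t := fun t => by
    show (0:ℝ) ≤ (lam t) ^ 2 * F t ^ 2
    positivity
  have hgt : ∀ t, g t = (lam t) ^ 2 * F t ^ 2 := fun t => rfl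
  -- lower and upper bounds on λ F H
  have hlow : ∀ t, 0 ≤ lam t * F t * H t + g t := by
    intro t
    rw [hgt t]
    nlinarith [sq_nonneg (lam t * F t + H t), sq_nonneg (B t), hq t]
  have hup : ∀ t, lam t * F t * H t ≤ g t := by
    intro t
    rw [hgt t]
    nlinarith [sq_nonneg (lam t * F t - H t), sq_nonneg (B t), hq t]
  have hgpos : ∀ t, 0 < g t := by
    intro t
    rcases le_or_gt 0 t with ht | ht
    · -- forward: φ s = exp(8s) g s is monotone on [0, t]  (λ ≤ 1 there)
      set φ : ℝ → ℝ := fun s => Real.exp (8 * s) * g s with hφdef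
      have hφd : ∀ s, HasDerivAt φ
          (Real.exp (8 * s) * (4 * (lam s) ^ 2 * F s * H s - 4 * g s + 8 * g s)) s := by
        intro s
        have := (exp_deriv 8 s).mul (hg s)
        refine this.congr_deriv ?_
        ring
      have hmono : MonotoneOn φ (Set.Icc 0 t) := by
        apply monotoneOn_of_deriv_nonneg (convex_Icc 0 t)
        · exact (Differentiable.continuous (fun x => (hφd x).differentiableAt)).continuousOn
        · intro x _
          exact ((hφd x).differentiableAt).differentiableWithinAt
        · intro x hx
          rw [interior_Icc] at hx
          rw [(hφd x).deriv]
          have hlamle : lam x ≤ 1 := by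
            rw [lam]
            have hx0 : -2 * x ≤ 0 := by nlinarith [hx.1]
            exact Real.exp_le_one_iff.mpr hx0
          have h1 := hlow x
          have h2 := hgnn x
          have h3 := (lam_pos x).le
          have hmain : 0 ≤ 4 * (lam x) ^ 2 * F x * H x - 4 * g x + 8 * g x := by
            nlinarith [mul_nonneg h3 h1, mul_nonneg (sub_nonneg.mpr hlamle) h2]
          exact mul_nonneg (Real.exp_pos _).le hmain
      have hcmp := hmono (Set.left_mem_Icc.mpr ht) (Set.right_mem_Icc.mpr ht) ht
      have hφ0 : φ 0 = 1 := by
        show Real.exp (8 * 0) * g 0 = 1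
        simp [hg0]
      rw [hφ0] at hcmp
      have h5 : φ t = Real.exp (8 * t) * g t := rfl
      have h4 : 0 < Real.exp (8 * t) * g t := by rw [← h5]; linarith
      rcases mul_pos_iff.mp h4 with ⟨_, h⟩ | ⟨h, _⟩
      · exact h
      · linarith [Real.exp_pos (8 * t)]
    · -- backward: ψ s = exp(-K s) g s is antitone on [t, 0], K = 4 + 4 e^{-2t}
      set K : ℝ := 4 + 4 * Real.exp (-2 * t) with hKdef
      set ψ : ℝ → ℝ := fun s => Real.exp (-K * s) * g s with hψdef
      have hψd : ∀ s, HasDerivAt ψ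
          (Real.exp (-K * s) * (4 * (lam s) ^ 2 * F s * H s - 4 * g s - K * g s)) s := by
        intro s
        have := (exp_deriv (-K) s).mul (hg s)
        refine this.congr_deriv ?_
        ring
      have hanti : AntitoneOn ψ (Set.Icc t 0) := by
        apply antitoneOn_of_deriv_nonpos (convex_Icc t 0)
        · exact (Differentiable.continuous (fun x => (hψd x).differentiableAt)).continuousOn
        · intro x _
          exact ((hψd x).differentiableAt).differentiableWithinAt
        · intro x hx
          rw [interior_Icc] at hx
          rw [(hψd x).deriv]
          have hlamle : lam x ≤ Real.exp (-2 * t) := by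
            rw [lam]
            apply Real.exp_le_exp.mpr
            nlinarith [hx.1]
          have h1 := hup x
          have h2 := hgnn x
          have h3 := (lam_pos x).le
          have hKx : 4 * lam x ≤ K := by rw [hKdef]; nlinarith
          have hmain : 4 * (lam x) ^ 2 * F x * H x - 4 * g x - K * g x ≤ 0 := by
            nlinarith [mul_nonneg h3 (sub_nonneg.mpr h1), mul_nonneg (sub_nonneg.mpr hKx) h2]
          exact mul_nonpos_of_nonneg_of_nonpos (Real.exp_pos _).le hmain
      have hcmp := hanti (Set.left_mem_Icc.mpr ht.le) (Set.right_mem_Icc.mpr ht.le) ht.le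
      have hψ0 : ψ 0 = 1 := by
        show Real.exp (-K * 0) * g 0 = 1
        simp [hg0]
      rw [hψ0] at hcmp
      have h5 : ψ t = Real.exp (-K * t) * g t := rfl
      have h4 : 0 < Real.exp (-K * t) * g t := by rw [← h5]; linarith
      rcases mul_pos_iff.mp h4 with ⟨_, h⟩ | ⟨h, _⟩
      · exact h
      · linarith [Real.exp_pos (-K * t)]
  -- conclude via IVT
  intro t
  by_contra hle
  push_neg at hle
  have hFt : F t ≠ 0 := by
    intro h0
    have hp := hgpos t
    rw [hgt t, h0] at hp
    simp at hp
  have hFt' : F t < 0 := lt_of_le_of_ne hle hFt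
  have hcont : ContinuousOn F (Set.uIcc 0 t) :=
    (Differentiable.continuous (fun x => (hF x).differentiableAt)).continuousOn
  have h0mem : (0 : ℝ) ∈ Set.uIcc (F 0) (F t) := by
    rw [hF0]
    exact Set.mem_uIcc.mpr (Or.inr ⟨hFt'.le, zero_le_one⟩)
  obtain ⟨c, _, hc⟩ := intermediate_value_uIcc hcont h0mem
  have hp := hgpos c
  rw [hgt c, hc] at hp
  simp at hp

theorem stmt_7 (μ : ℝ → ℝ) (hμ : Continuous μ)
    (f₁ f₂ f₃ h₁ h₂ h₃ b₁ b₂ b₃ : ℝ → ℝ)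
    (hf₁ : ∀ t, HasDerivAt f₁ (2 * h₁ t) t)
    (hf₂ : ∀ t, HasDerivAt f₂ (2 * h₂ t) t)
    (hf₃ : ∀ t, HasDerivAt f₃ (2 * h₃ t) t)
    (hh₁ : ∀ t, HasDerivAt h₁ (2 * (lam t) ^ 2 * f₁ t - 2 * h₁ t - μ t * b₁ t) t)
    (hh₂ : ∀ t, HasDerivAt h₂ (2 * (lam t) ^ 2 * f₂ t - 2 * h₂ t - μ t * b₂ t) t)
    (hh₃ : ∀ t, HasDerivAt h₃ (2 * (lam t) ^ 2 * f₃ t - 2 * h₃ t - μ t * b₃ t) t)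
    (hb₁ : ∀ t, HasDerivAt b₁ (μ t * h₁ t - 2 * b₁ t) t)
    (hb₂ : ∀ t, HasDerivAt b₂ (μ t * h₂ t - 2 * b₂ t) t)
    (hb₃ : ∀ t, HasDerivAt b₃ (μ t * h₃ t - 2 * b₃ t) t)
    (hf₁0 : f₁ 0 = 0) (hh₁0 : h₁ 0 = 0) (hb₁0 : b₁ 0 = 1)
    (hf₂0 : f₂ 0 = 1) (hh₂0 : h₂ 0 = 0) (hb₂0 : b₂ 0 = 0)
    (hf₃0 : f₃ 0 = 0) (hh₃0 : h₃ 0 = -1) (hb₃0 : b₃ 0 = 0) :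
    ∀ t : ℝ, 0 < f₂ t + f₃ t ∧ 0 < f₂ t - f₃ t := by
  have hsum : ∀ t, 0 < f₂ t + f₃ t := by
    apply key μ (fun t => f₂ t + f₃ t) (fun t => h₂ t + h₃ t) (fun t => b₂ t + b₃ t)
    · intro t
      have := (hf₂ t).add (hf₃ t)
      refine this.congr_deriv ?_; ring
    · intro t
      have := (hh₂ t).add (hh₃ t)
      refine this.congr_deriv ?_; ring
    · intro t
      have := (hb₂ t).add (hb₃ t)
      refine this.congr_deriv ?_; ring
    · simp [hf₂0, hf₃0]
    · simp [hh₂0, hh₃0, hb₂0, hb₃0]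
  have hdiff : ∀ t, 0 < f₂ t - f₃ t := by
    apply key μ (fun t => f₂ t - f₃ t) (fun t => h₂ t - h₃ t) (fun t => b₂ t - b₃ t)
    · intro t
      have := (hf₂ t).sub (hf₃ t)
      refine this.congr_deriv ?_; ring
    · intro t
      have := (hh₂ t).sub (hh₃ t)
      refine this.congr_deriv ?_; ring
    · intro t
      have := (hb₂ t).sub (hb₃ t)
      refine this.congr_deriv ?_; ring
    · simp [hf₂0, hf₃0]
    · simp [hh₂0, hh₃0, hb₂0, hb₃0]
  exact fun t => ⟨hsum t, hdiff t⟩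
end
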